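/- arXiv:1401.0700 — 10 statements merged into one kernel-verified Lean document; each statement's English description precedes it below -/
import Mathlib

section
/- Let f(h) = h² + 2h − 3/4 ∈ ℂ[h]. Then f(h) − h = (h + 3/2)(h − 1/2) and f(f(h)) − h = (h + 3/2)³(h − 1/2) as polynomials in ℂ[h]. Consequently every solution of f(f(c)) = c in ℂ already satisfies f(c) = c; in particular f has no point of exact period 2. -/
open Polynomial

/-- For `f(h) = h² + 2h − 3/4`, we have `f(h) − h = (h + 3/2)(h − 1/2)` and
`f(f(h)) − h = (h + 3/2)³(h − 1/2)`; consequently every solution of `f(f(c)) = c`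
already satisfies `f(c) = c`, so `f` has no point of exact period 2. -/
theorem no_exact_period_two :
    letI f : Polynomial ℂ := X ^ 2 + C 2 * X - C (3 / 4)
    f - X = (X + C (3 / 2)) * (X - C (1 / 2)) ∧
    f.comp f - X = (X + C (3 / 2)) ^ 3 * (X - C (1 / 2)) ∧
    ∀ c : ℂ, f.eval (f.eval c) = c → f.eval c = c := by
  refine ⟨?_, ?_, ?_⟩
  · apply Polynomial.funext
    intro x
    simp only [eval_sub, eval_add, eval_mul, eval_pow, eval_X, eval_C]
    ring
  · apply Polynomial.funext
    intro x
    simp only [eval_comp, eval_sub, eval_add, eval_mul, eval_pow, eval_X, eval_C]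
    ring
  · intro c h
    simp only [eval_sub, eval_add, eval_mul, eval_pow, eval_X, eval_C] at h ⊢
    have key : (c + 3/2)^3 * (c - 1/2) = 0 := by linear_combination h
    rcases mul_eq_zero.1 key with h1 | h2
    · have h1' : c + 3/2 = 0 := pow_eq_zero_iff (by norm_num) |>.1 h1
      have : c = -(3/2) := by linear_combination h1'
      subst this; norm_num
    · have : c = 1/2 := by linear_combination h2
      subst this; norm_num
end

section
/- Let f ∈ ℂ[h], n ≥ 1, and ż ∈ ℂ with ż + f^{(n)}(−ż) = 0. Define linear operators X, H, Y on V = ℂ^n (with basis e_0, …, e_{n−1}) by: X e_i = e_{i+1} for i < n−1 and X e_{n−1} = 0; H e_i = f^{(i)}(−ż) e_i; Y e_0 = 0 and Y e_i = (ż + f^{(i)}(−ż)) e_{i−1} for i ≥ 1. Then these operators satisfy H∘X = X∘f(H), Y∘H = f(H)∘Y, and Y∘X − X∘Y = f(H) − H, where f(H) is the operator obtained by evaluating the polynomial f at H. -/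
open Polynomial Matrix

/-- The operators of the module `C(ż, n)` on `ℂⁿ` satisfy the defining relations
of the generalized Heisenberg algebra `H(f)`:
`H X = X f(H)`, `Y H = f(H) Y`, `Y X − X Y = f(H) − H`. -/
theorem C_module_relations (f : Polynomial ℂ) (n : ℕ) (hn : 1 ≤ n) (zdot : ℂ)
    (hz : zdot + (fun c : ℂ => f.eval c)^[n] (-zdot) = 0) :
    letI φ : ℂ → ℂ := fun c => f.eval c
    letI X : Matrix (Fin n) (Fin n) ℂ :=
      Matrix.of fun i j => if (i : ℕ) = (j : ℕ) + 1 then 1 else 0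
    letI H : Matrix (Fin n) (Fin n) ℂ :=
      Matrix.diagonal fun i => φ^[(i : ℕ)] (-zdot)
    letI Y : Matrix (Fin n) (Fin n) ℂ :=
      Matrix.of fun i j => if (j : ℕ) = (i : ℕ) + 1 then zdot + φ^[(j : ℕ)] (-zdot) else 0
    H * X = X * aeval H f ∧ Y * H = aeval H f * Y ∧
      Y * X - X * Y = aeval H f - H := by
  set φ : ℂ → ℂ := fun c => f.eval c with hφ
  set X : Matrix (Fin n) (Fin n) ℂ :=
    Matrix.of fun i j => if (i : ℕ) = (j : ℕ) + 1 then (1:ℂ) else 0 with hX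
  set H : Matrix (Fin n) (Fin n) ℂ :=
    Matrix.diagonal fun i => φ^[(i : ℕ)] (-zdot) with hH
  set Y : Matrix (Fin n) (Fin n) ℂ :=
    Matrix.of fun i j => if (j : ℕ) = (i : ℕ) + 1 then zdot + φ^[(j : ℕ)] (-zdot) else 0 with hY
  set d : Fin n → ℂ := fun i => φ^[(i : ℕ)] (-zdot) with hd
  have hA : aeval H f = Matrix.diagonal (fun i : Fin n => φ^[(i : ℕ) + 1] (-zdot)) := by
    have h1 : H = Matrix.diagonalAlgHom ℂ d := rfl
    rw [h1, aeval_algHom_apply]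
    have : aeval d f = fun i : Fin n => φ^[(i : ℕ) + 1] (-zdot) := by
      funext i
      rw [aeval_fn_apply, aeval_def, eval₂_eq_eval_map, Algebra.algebraMap_self,
        Polynomial.map_id, Function.iterate_succ_apply']
    rw [this]
    rfl
  have hXij : ∀ i j : Fin n, X i j = if (i : ℕ) = (j : ℕ) + 1 then 1 else 0 := fun _ _ => rfl
  have hYij : ∀ i j : Fin n, Y i j =
      if (j : ℕ) = (i : ℕ) + 1 then zdot + φ^[(j : ℕ)] (-zdot) else 0 := fun _ _ => rfl
  refine ⟨?_, ?_, ?_⟩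
  · ext i j
    rw [hA, Matrix.diagonal_mul, Matrix.mul_diagonal, hXij]
    by_cases h : (i : ℕ) = (j : ℕ) + 1
    · simp [h, hd]
    · simp [h]
  · ext i j
    rw [hA, Matrix.diagonal_mul, Matrix.mul_diagonal, hYij]
    by_cases h : (j : ℕ) = (i : ℕ) + 1
    · simp [h, hd, mul_comm]
    · simp [h]
  · ext i j
    rw [Matrix.sub_apply, Matrix.sub_apply, hA, hH, Matrix.mul_apply, Matrix.mul_apply]
    have hYX : (∑ k, Y i k * X k j) =
        if h : i = j ∧ (i : ℕ) + 1 < n then zdot + φ^[(i : ℕ) + 1] (-zdot) else 0 := by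
      split
      · next h =>
        obtain ⟨rfl, hlt⟩ := h
        rw [Finset.sum_eq_single (⟨(i : ℕ) + 1, hlt⟩ : Fin n)]
        · rw [hYij, hXij]; simp
        · intro k _ hk
          rw [hYij, hXij]
          by_cases h1 : (k : ℕ) = (i : ℕ) + 1
          · exact absurd (Fin.ext h1) hk
          · simp [h1]
        · simp
      · next h =>
        apply Finset.sum_eq_zero
        intro k _
        rw [hYij, hXij]
        by_cases h1 : (k : ℕ) = (i : ℕ) + 1
        · by_cases h2 : (k : ℕ) = (j : ℕ) + 1
          · exfalso
            apply h
            have hij : i = j := Fin.ext (by omega)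
            exact ⟨hij, h1 ▸ k.isLt⟩
          · simp [h2]
        · simp [h1]
    have hXY : (∑ k, X i k * Y k j) =
        if h : i = j ∧ 1 ≤ (i : ℕ) then zdot + φ^[(i : ℕ)] (-zdot) else 0 := by
      split
      · next h =>
        obtain ⟨rfl, hle⟩ := h
        rw [Finset.sum_eq_single (⟨(i : ℕ) - 1, by omega⟩ : Fin n)]
        · rw [hYij, hXij]
          simp only [Fin.val_mk]
          rw [if_pos (by omega), if_pos (by omega), one_mul]
        · intro k _ hk
          rw [hYij, hXij]
          by_cases h1 : (i : ℕ) = (k : ℕ) + 1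
          · exact absurd (Fin.ext (by simp; omega)) hk
          · simp [h1]
        · simp
      · next h =>
        apply Finset.sum_eq_zero
        intro k _
        rw [hYij, hXij]
        by_cases h1 : (i : ℕ) = (k : ℕ) + 1
        · by_cases h2 : (j : ℕ) = (k : ℕ) + 1
          · exfalso
            apply h
            exact ⟨Fin.ext (by omega), by omega⟩
          · simp [h2]
        · simp [h1]
    rw [hYX, hXY]
    by_cases hij : i = j
    · subst hij
      rw [Matrix.diagonal_apply_eq, Matrix.diagonal_apply_eq]
      by_cases h1 : (i : ℕ) + 1 < n
      · by_cases h2 : 1 ≤ (i : ℕ)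
        · rw [dif_pos ⟨rfl, h1⟩, dif_pos ⟨rfl, h2⟩]; ring
        · have h0 : (i : ℕ) = 0 := by omega
          rw [dif_pos ⟨rfl, h1⟩, dif_neg (fun h => absurd h.2 (by omega))]
          have hdi : d i = -zdot := by rw [hd]; simp [h0]
          rw [hdi]; ring
      · rw [dif_neg (fun h => absurd h.2 (by omega))]
        have hi1 : (i : ℕ) + 1 = n := by omega
        have hfix : φ^[(i : ℕ) + 1] (-zdot) = -zdot := by
          rw [hi1]; linear_combination hz
        by_cases h2 : 1 ≤ (i : ℕ)
        · rw [dif_pos ⟨rfl, h2⟩]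
          have hdi : d i = φ^[(i : ℕ)] (-zdot) := rfl
          rw [hfix, hdi]; ring
        · have h0 : (i : ℕ) = 0 := by omega
          rw [dif_neg (fun h => absurd h.2 (by omega))]
          have hdi : d i = -zdot := by rw [hd]; simp [h0]
          rw [hfix, hdi]; ring
    · rw [dif_neg (fun h => hij h.1), dif_neg (fun h => hij h.1),
        Matrix.diagonal_apply_ne _ hij, Matrix.diagonal_apply_ne _ hij]
end

section
/- With the setup of the module C(ż, n) on ℂ^n (operators X, H, Y as defined via f^{(i)}(−ż)), if moreover ż + f^{(i)}(−ż) ≠ 0 for all i = 1, …, n−1, then the only subspaces of ℂ^n invariant under all three operators X, H, Y are 0 and ℂ^n. -/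
open Polynomial Matrix

private lemma Yapply (n : ℕ) (c : ℕ → ℂ) (v : Fin n → ℂ) (i : Fin n) :
    (Matrix.of fun i j : Fin n => if (j:ℕ) = (i:ℕ)+1 then c (j:ℕ) else 0).mulVec v i
      = if h : (i:ℕ)+1 < n then c ((i:ℕ)+1) * v ⟨(i:ℕ)+1, h⟩ else 0 := by
  unfold Matrix.mulVec dotProduct
  split
  · next h =>
    rw [Finset.sum_eq_single (⟨(i:ℕ)+1, h⟩ : Fin n)]
    · simp
    · intro b _ hb
      have : (b:ℕ) ≠ (i:ℕ)+1 := fun hb' => hb (Fin.ext hb')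
      simp [this]
    · simp
  · next h =>
    apply Finset.sum_eq_zero
    intro j _
    have : (j:ℕ) ≠ (i:ℕ)+1 := by omega
    simp [this]

private lemma key (n : ℕ) (hn : 0 < n) (c : ℕ → ℂ) (hc : ∀ i, 1 ≤ i → i < n → c i ≠ 0)
    (W : Submodule ℂ (Fin n → ℂ))
    (hY : ∀ v ∈ W,
      (Matrix.of fun i j : Fin n => if (j:ℕ) = (i:ℕ)+1 then c (j:ℕ) else 0).mulVec v ∈ W) :
    ∀ k : ℕ, ∀ v ∈ W, v ≠ 0 → (∀ i : Fin n, k < (i:ℕ) → v i = 0) →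
      Pi.single (⟨0, hn⟩ : Fin n) (1:ℂ) ∈ W := by
  intro k
  induction k with
  | zero =>
    intro v hv hv0 hsupp
    set i0 : Fin n := ⟨0, hn⟩
    have hvi0 : v i0 ≠ 0 := by
      intro h
      apply hv0
      funext i
      rcases Nat.eq_zero_or_pos (i:ℕ) with h0 | h0
      · have : i = i0 := Fin.ext h0
        rw [this, h]; rfl
      · exact hsupp i h0
    have hv' : Pi.single i0 (1:ℂ) = (v i0)⁻¹ • v := by
      funext i
      rcases Nat.eq_zero_or_pos (i:ℕ) with h0 | h0
      · have : i = i0 := Fin.ext h0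
        subst this
        simp [Pi.single_apply, inv_mul_cancel₀ hvi0]
      · have hne0 : i ≠ i0 := by intro h; rw [h] at h0; simp [i0] at h0
        simp [Pi.single_apply, hne0, hsupp i h0]
    rw [hv']
    exact W.smul_mem _ hv
  | succ k ih =>
    intro v hv hv0 hsupp
    by_cases hkn : k + 1 < n
    · set j : Fin n := ⟨k+1, hkn⟩
      by_cases hvj : v j = 0
      · refine ih v hv hv0 ?_
        intro i hi
        rcases Nat.lt_or_ge (k+1) (i:ℕ) with h | h
        · exact hsupp i h
        · have : i = j := Fin.ext (show (i:ℕ) = k+1 by omega)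
          rw [this]; exact hvj
      · set Y : Matrix (Fin n) (Fin n) ℂ :=
          Matrix.of fun i j : Fin n => if (j:ℕ) = (i:ℕ)+1 then c (j:ℕ) else 0
        have hw : Y.mulVec v ∈ W := hY v hv
        have hwk : (Y.mulVec v) ⟨k, by omega⟩ = c (k+1) * v j := by
          rw [Yapply]
          simp [hkn]
          exact Or.inl rfl
        have hw0 : Y.mulVec v ≠ 0 := by
          intro h
          have := congrFun h ⟨k, by omega⟩
          rw [hwk] at this
          exact (mul_ne_zero (hc (k+1) (by omega) hkn) hvj) this
        refine ih (Y.mulVec v) hw hw0 ?_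
        intro i hi
        rw [Yapply]
        split
        · next h =>
          have : v ⟨(i:ℕ)+1, h⟩ = 0 := hsupp _ (show k+1 < (i:ℕ)+1 by omega)
          rw [this, mul_zero]
        · rfl
    · refine ih v hv hv0 ?_
      intro i hi
      exact absurd i.isLt (by omega)

/-- If `ż + f^{(i)}(−ż) ≠ 0` for `i = 1, …, n−1`, then the module `C(ż, n)` on
`ℂⁿ` is simple: the only subspaces invariant under `X`, `H`, `Y` are `0` and `ℂⁿ`. -/
theorem C_module_simple (f : Polynomial ℂ) (n : ℕ) (hn : 1 ≤ n) (zdot : ℂ)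
    (hz : zdot + (fun c : ℂ => f.eval c)^[n] (-zdot) = 0)
    (hne : ∀ i : ℕ, 1 ≤ i → i ≤ n - 1 → zdot + (fun c : ℂ => f.eval c)^[i] (-zdot) ≠ 0) :
    letI φ : ℂ → ℂ := fun c => f.eval c
    letI X : Matrix (Fin n) (Fin n) ℂ :=
      Matrix.of fun i j => if (i : ℕ) = (j : ℕ) + 1 then 1 else 0
    letI H : Matrix (Fin n) (Fin n) ℂ :=
      Matrix.diagonal fun i => φ^[(i : ℕ)] (-zdot)
    letI Y : Matrix (Fin n) (Fin n) ℂ :=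
      Matrix.of fun i j => if (j : ℕ) = (i : ℕ) + 1 then zdot + φ^[(j : ℕ)] (-zdot) else 0
    ∀ W : Submodule ℂ (Fin n → ℂ),
      (∀ v ∈ W, X.mulVec v ∈ W) → (∀ v ∈ W, H.mulVec v ∈ W) →
      (∀ v ∈ W, Y.mulVec v ∈ W) → W = ⊥ ∨ W = ⊤ := by
  intro W hX hH hY
  by_cases hW : W = ⊥
  · exact Or.inl hW
  right
  have hn0 : 0 < n := hn
  set c : ℕ → ℂ := fun i => zdot + (fun c : ℂ => f.eval c)^[i] (-zdot) with hcdef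
  have hc : ∀ i, 1 ≤ i → i < n → c i ≠ 0 := fun i h1 h2 => hne i h1 (by omega)
  obtain ⟨v, hvW, hv0⟩ := (Submodule.ne_bot_iff W).mp hW
  -- e₀ ∈ W
  have he0 : Pi.single (⟨0, hn0⟩ : Fin n) (1:ℂ) ∈ W := by
    refine key n hn0 c hc W hY n v hvW hv0 ?_
    intro i hi
    exact absurd i.isLt (by omega)
  -- all basis vectors in W
  have hall : ∀ m : ℕ, ∀ j : Fin n, (j:ℕ) = m → Pi.single j (1:ℂ) ∈ W := by
    intro m
    induction m with
    | zero =>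
      intro j hj
      have : j = ⟨0, hn0⟩ := Fin.ext hj
      rw [this]; exact he0
    | succ m ih =>
      intro j hj
      have hm : m < n := by omega
      set j' : Fin n := ⟨m, hm⟩
      have hj' : Pi.single j' (1:ℂ) ∈ W := ih j' rfl
      have := hX _ hj'
      have heq : (Matrix.of fun i k : Fin n => if (i:ℕ) = (k:ℕ)+1 then (1:ℂ) else 0).mulVec
          (Pi.single j' 1) = Pi.single j 1 := by
        funext i
        rw [Matrix.mulVec_single]
        simp only [Matrix.of_apply, Pi.single_apply]
        by_cases h : i = j
        · subst h
          simp [hj]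
          exact rfl
        · have : (i:ℕ) ≠ (j':ℕ)+1 := by
            intro h'
            have h'' : (i:ℕ) = m + 1 := h'
            exact h (Fin.ext (by rw [hj]; exact h''))
          simp [this, h]
      rw [heq] at this
      exact this
  -- conclude
  rw [Submodule.eq_top_iff']
  intro v
  have : v = ∑ i : Fin n, Pi.single i (v i) := (Finset.univ_sum_single v).symm
  rw [this]
  refine W.sum_mem ?_
  intro i _
  have : Pi.single i (v i) = v i • (Pi.single i (1:ℂ) : Fin n → ℂ) := by
    funext j
    simp [Pi.single_apply, mul_ite]
  rw [this]
  exact W.smul_mem _ (hall (i:ℕ) i rfl)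
end

section
/- With the setup of C(ż, n), if ż + f^{(i)}(−ż) = 0 for some i ∈ {1, …, n−1}, then span{e_i, e_{i+1}, …, e_{n−1}} is a proper nonzero subspace of ℂ^n invariant under X, H, and Y. Hence the module C(ż, n) is not simple. -/
open Polynomial Matrix

/-- If `ż + f^{(i)}(−ż) = 0` for some `1 ≤ i ≤ n−1`, then
`span{e_i, …, e_{n−1}}` is a proper nonzero subspace of `ℂⁿ` invariant under
`X`, `H`, `Y`; hence `C(ż, n)` is not simple. -/
theorem C_module_not_simple (f : Polynomial ℂ) (n : ℕ) (hn : 1 ≤ n) (zdot : ℂ)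
    (hz : zdot + (fun c : ℂ => f.eval c)^[n] (-zdot) = 0)
    (i : ℕ) (hi1 : 1 ≤ i) (hi2 : i ≤ n - 1)
    (hzi : zdot + (fun c : ℂ => f.eval c)^[i] (-zdot) = 0) :
    letI φ : ℂ → ℂ := fun c => f.eval c
    letI X : Matrix (Fin n) (Fin n) ℂ :=
      Matrix.of fun k j => if (k : ℕ) = (j : ℕ) + 1 then 1 else 0
    letI H : Matrix (Fin n) (Fin n) ℂ :=
      Matrix.diagonal fun k => φ^[(k : ℕ)] (-zdot)
    letI Y : Matrix (Fin n) (Fin n) ℂ :=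
      Matrix.of fun k j => if (j : ℕ) = (k : ℕ) + 1 then zdot + φ^[(j : ℕ)] (-zdot) else 0
    letI W : Submodule ℂ (Fin n → ℂ) :=
      Submodule.span ℂ {v : Fin n → ℂ | ∃ j : Fin n, i ≤ (j : ℕ) ∧ v = Pi.single j 1}
    W ≠ ⊥ ∧ W ≠ ⊤ ∧ (∀ v ∈ W, X.mulVec v ∈ W) ∧ (∀ v ∈ W, H.mulVec v ∈ W) ∧
      (∀ v ∈ W, Y.mulVec v ∈ W) := by
  set φ : ℂ → ℂ := fun c => f.eval c with hφ
  set X : Matrix (Fin n) (Fin n) ℂ :=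
    Matrix.of fun k j => if (k : ℕ) = (j : ℕ) + 1 then 1 else 0 with hX
  set H : Matrix (Fin n) (Fin n) ℂ :=
    Matrix.diagonal fun k => φ^[(k : ℕ)] (-zdot) with hH
  set Y : Matrix (Fin n) (Fin n) ℂ :=
    Matrix.of fun k j => if (j : ℕ) = (k : ℕ) + 1 then zdot + φ^[(j : ℕ)] (-zdot) else 0 with hY
  set W : Submodule ℂ (Fin n → ℂ) :=
    Submodule.span ℂ {v : Fin n → ℂ | ∃ j : Fin n, i ≤ (j : ℕ) ∧ v = Pi.single j 1} with hW
  have hn1 : n - 1 < n := Nat.sub_lt (by omega) one_pos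
  have hin : i < n := by omega
  let V : Submodule ℂ (Fin n → ℂ) :=
    { carrier := {v | ∀ k : Fin n, (k : ℕ) < i → v k = 0}
      add_mem' := fun {a b} ha hb k hk => by simp [ha k hk, hb k hk]
      zero_mem' := fun k _ => rfl
      smul_mem' := fun c v hv k hk => by simp [hv k hk] }
  have memV : ∀ v : Fin n → ℂ, v ∈ V ↔ ∀ k : Fin n, (k : ℕ) < i → v k = 0 :=
    fun _ => Iff.rfl
  have hsingle : ∀ j : Fin n, i ≤ (j : ℕ) → Pi.single j (1 : ℂ) ∈ W :=
    fun j hj => Submodule.subset_span ⟨j, hj, rfl⟩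
  have hWV : W = V := by
    apply le_antisymm
    · rw [Submodule.span_le]
      rintro v ⟨j, hj, rfl⟩ k hk
      simp only [Pi.single_apply]
      rw [if_neg]
      intro h
      rw [h] at hk
      omega
    · intro v hv
      have hveq : v = ∑ j : Fin n, v j • (Pi.single j 1 : Fin n → ℂ) := by
        ext k
        simp [Pi.single_apply]
      rw [hveq]
      apply Submodule.sum_mem
      intro j _
      by_cases hj : i ≤ (j : ℕ)
      · exact Submodule.smul_mem _ _ (hsingle j hj)
      · have : v j = 0 := hv j (by omega)
        simp [this]
  refine ⟨?_, ?_, ?_, ?_, ?_⟩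
  · intro hbot
    have h1 := hsingle ⟨n - 1, hn1⟩ (by simpa using hi2)
    rw [hbot, Submodule.mem_bot] at h1
    have := congrFun h1 ⟨n - 1, hn1⟩
    simp at this
  · intro htop
    have h0 : (Pi.single (⟨0, by omega⟩ : Fin n) (1 : ℂ)) ∈ W := htop ▸ Submodule.mem_top
    rw [hWV, memV] at h0
    have := h0 ⟨0, by omega⟩ (by show 0 < i; omega)
    simp at this
  · rw [hWV]
    intro v hv k hk
    rw [memV] at hv
    show (X.mulVec v) k = 0
    simp only [Matrix.mulVec, dotProduct, Matrix.of_apply, X]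
    apply Finset.sum_eq_zero
    intro j _
    by_cases h : (k : ℕ) = (j : ℕ) + 1
    · rw [if_pos h, one_mul]
      exact hv j (by omega)
    · rw [if_neg h, zero_mul]
  · rw [hWV]
    intro v hv k hk
    rw [memV] at hv
    show (H.mulVec v) k = 0
    simp only [H, Matrix.mulVec_diagonal]
    rw [hv k hk, mul_zero]
  · rw [hWV]
    intro v hv k hk
    rw [memV] at hv
    show (Y.mulVec v) k = 0
    simp only [Matrix.mulVec, dotProduct, Matrix.of_apply, Y]
    apply Finset.sum_eq_zero
    intro j _
    by_cases h : (j : ℕ) = (k : ℕ) + 1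
    · rw [if_pos h]
      by_cases hj : (j : ℕ) < i
      · rw [hv j hj, mul_zero]
      · have hji : (j : ℕ) = i := by omega
        rw [hji]
        rw [show zdot + φ^[i] (-zdot) = 0 from hzi, zero_mul]
    · rw [if_neg h, zero_mul]
end

section
/- Let f ∈ ℂ[h], λ ∈ S_f, ż ∈ ℂ, and let n ≥ 1 with λ(i+n) = λ(i) for all i, and a ∈ ℂ*. Define operators on ℂ^n (basis e_0,…,e_{n−1}, indices mod n) by: H e_i = λ(i) e_i; X e_i = e_{i+1} for i < n−1 and X e_{n−1} = a·e_0; Y e_i = (λ(i) + ż) e_{i−1} for i ≥ 1 and Y e_0 = (λ(0) + ż)·a^{−1}·e_{n−1}. Then H∘X = X∘f(H), Y∘H = f(H)∘Y, and Y∘X − X∘Y = f(H) − H. -/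
open Polynomial Matrix

/-- The operators of the module `A'(λ, ż, a)` on `ℂⁿ` (cyclic version) satisfy
the defining relations of the generalized Heisenberg algebra `H(f)`. -/
theorem A'_module_relations (f : Polynomial ℂ) (lam : ℤ → ℂ)
    (hlam : ∀ i : ℤ, f.eval (lam i) = lam (i + 1))
    (n : ℕ) (hn : 1 ≤ n) (hper : ∀ i : ℤ, lam (i + n) = lam i)
    (zdot : ℂ) (a : ℂ) (ha : a ≠ 0) :
    letI H : Matrix (Fin n) (Fin n) ℂ := Matrix.diagonal fun i => lam (i : ℕ)
    letI X : Matrix (Fin n) (Fin n) ℂ :=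
      Matrix.of fun i j =>
        if (i : ℕ) = ((j : ℕ) + 1) % n then (if (j : ℕ) = n - 1 then a else 1) else 0
    letI Y : Matrix (Fin n) (Fin n) ℂ :=
      Matrix.of fun i j =>
        if (j : ℕ) = ((i : ℕ) + 1) % n then
          (lam (j : ℕ) + zdot) * (if (j : ℕ) = 0 then a⁻¹ else 1) else 0
    H * X = X * aeval H f ∧ Y * H = aeval H f * Y ∧
      Y * X - X * Y = aeval H f - H := by
  haveI : NeZero n := ⟨by omega⟩
  set H : Matrix (Fin n) (Fin n) ℂ := Matrix.diagonal fun i => lam (i : ℕ) with hH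
  set X : Matrix (Fin n) (Fin n) ℂ :=
    Matrix.of fun i j =>
      if (i : ℕ) = ((j : ℕ) + 1) % n then (if (j : ℕ) = n - 1 then a else 1) else 0 with hX0
  set Y : Matrix (Fin n) (Fin n) ℂ :=
    Matrix.of fun i j =>
      if (j : ℕ) = ((i : ℕ) + 1) % n then
        (lam (j : ℕ) + zdot) * (if (j : ℕ) = 0 then a⁻¹ else 1) else 0 with hY0
  -- periodicity mod n
  have hmod : ∀ m : ℕ, lam ((m % n : ℕ) : ℤ) = lam m := by
    intro m
    induction m using Nat.strong_induction_on with
    | _ m ih =>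
      rcases lt_or_ge m n with h | h
      · rw [Nat.mod_eq_of_lt h]
      · have h2 : lam ((m : ℤ)) = lam ((m - n : ℕ) : ℤ) := by
          have := hper ((m - n : ℕ) : ℤ)
          rw [← this]
          congr 1
          omega
        rw [Nat.mod_eq_sub_mod h, h2, ih (m - n) (by omega)]
  have hcond : ∀ i j : Fin n, ((i : ℕ) = ((j : ℕ) + 1) % n ↔ i = j + 1) := by
    intro i j
    rw [Fin.ext_iff, Fin.val_add, Fin.val_one', Nat.add_mod_mod]
  have hval : ∀ i : Fin n, lam (((i + 1 : Fin n) : ℕ) : ℤ) = lam ((i : ℕ) + 1) := by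
    intro i
    rw [Fin.val_add, Fin.val_one', Nat.add_mod_mod, hmod]
    norm_cast
  have key : ∀ i k : Fin n, k + 1 = i → ((k : ℕ) = n - 1 ↔ (i : ℕ) = 0) := by
    intro i k hk
    have h := congrArg Fin.val hk
    rw [Fin.val_add, Fin.val_one', Nat.add_mod_mod] at h
    have hk' : (k : ℕ) < n := k.isLt
    constructor
    · intro h0
      rw [← h, h0, Nat.sub_add_cancel hn, Nat.mod_self]
    · intro h0
      rw [h0] at h
      have hd : n ∣ (k : ℕ) + 1 := Nat.dvd_of_mod_eq_zero h
      have := Nat.le_of_dvd (by omega) hd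
      omega
  -- the evaluated polynomial matrix
  have hF : aeval H f = Matrix.diagonal (fun i : Fin n => lam ((i : ℕ) + 1)) := by
    have h1 : H = Matrix.diagonalAlgHom ℂ (fun i : Fin n => lam ((i : ℕ) : ℤ)) := rfl
    have h4 : (aeval (fun i : Fin n => lam ((i : ℕ) : ℤ)) f) =
        fun i : Fin n => lam ((i : ℕ) + 1) := by
      funext i
      have h2 := aeval_algHom_apply (Pi.evalAlgHom ℂ (fun _ : Fin n => ℂ) i)
        (fun i : Fin n => lam ((i : ℕ) : ℤ)) f
      have h3 : (aeval (fun i : Fin n => lam ((i : ℕ) : ℤ)) f) i = f.eval (lam ((i : ℕ) : ℤ)) := by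
        simpa using h2.symm
      rw [h3, hlam]
    rw [h1, aeval_algHom_apply, h4]
    rfl
  -- diagonal form of Y * X
  have hYX : Y * X = Matrix.diagonal (fun i : Fin n => lam ((i : ℕ) + 1) + zdot) := by
    ext i j
    rw [Matrix.mul_apply, Finset.sum_eq_single (i + 1)]
    · show (if (((i+1 : Fin n)) : ℕ) = ((i : ℕ) + 1) % n then
          (lam (((i+1 : Fin n) : ℕ)) + zdot) * (if (((i+1 : Fin n)) : ℕ) = 0 then a⁻¹ else 1)
        else 0) *
        (if (((i+1 : Fin n)) : ℕ) = ((j : ℕ) + 1) % n then (if (j : ℕ) = n - 1 then a else 1)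
        else 0) = _
      rw [if_pos ((hcond (i+1) i).mpr rfl)]
      by_cases hij : i = j
      · subst hij
        rw [if_pos ((hcond (i+1) i).mpr rfl), Matrix.diagonal_apply_eq, hval]
        by_cases h0 : ((i + 1 : Fin n) : ℕ) = 0
        · rw [if_pos h0, if_pos ((key (i+1) i rfl).mpr h0)]
          field_simp
        · rw [if_neg h0, if_neg (fun hc => h0 ((key (i+1) i rfl).mp hc))]
          ring
      · have h' : ¬ ((i + 1 : Fin n) : ℕ) = ((j : ℕ) + 1) % n := fun hc =>
          hij (add_right_cancel ((hcond (i+1) j).mp hc))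
        rw [if_neg h', Matrix.diagonal_apply_ne _ hij, mul_zero]
    · intro b _ hb
      show (if ((b : Fin n) : ℕ) = ((i : ℕ) + 1) % n then _ else 0) * _ = 0
      rw [if_neg (fun hc => hb ((hcond b i).mp hc)), zero_mul]
    · intro h
      exact absurd (Finset.mem_univ _) h
  -- diagonal form of X * Y
  have hXY : X * Y = Matrix.diagonal (fun i : Fin n => lam ((i : ℕ)) + zdot) := by
    ext i j
    have hsub : (i - 1 : Fin n) + 1 = i := by
      rw [sub_add_cancel]
    rw [Matrix.mul_apply, Finset.sum_eq_single (i - 1)]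
    · show (if (i : ℕ) = (((i - 1 : Fin n) : ℕ) + 1) % n then
          (if ((i - 1 : Fin n) : ℕ) = n - 1 then a else 1) else 0) *
        (if (j : ℕ) = (((i - 1 : Fin n) : ℕ) + 1) % n then
          (lam ((j : ℕ)) + zdot) * (if (j : ℕ) = 0 then a⁻¹ else 1) else 0) = _
      rw [if_pos ((hcond i (i-1)).mpr hsub.symm)]
      by_cases hij : j = i
      · subst hij
        rw [if_pos ((hcond j (j-1)).mpr hsub.symm), Matrix.diagonal_apply_eq]
        by_cases h0 : (j : ℕ) = 0
        · rw [if_pos ((key j (j-1) hsub).mpr h0), if_pos h0]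
          field_simp
        · rw [if_neg (fun hc => h0 ((key j (j-1) hsub).mp hc)), if_neg h0]
          ring
      · have h' : ¬ (j : ℕ) = (((i - 1 : Fin n) : ℕ) + 1) % n := fun hc =>
          hij (by rw [(hcond j (i-1)).mp hc, hsub])
        rw [if_neg h', mul_zero, Matrix.diagonal_apply_ne _ (fun hc => hij hc.symm)]
    · intro b _ hb
      show (if (i : ℕ) = ((b : ℕ) + 1) % n then _ else 0) * _ = 0
      rw [if_neg, zero_mul]
      intro hc
      exact hb (by rw [(hcond i b).mp hc]; exact (add_sub_cancel_right _ _).symm)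
    · intro h
      exact absurd (Finset.mem_univ _) h
  refine ⟨?_, ?_, ?_⟩
  · rw [hF]
    ext i j
    rw [Matrix.diagonal_mul, Matrix.mul_diagonal]
    show lam ((i : ℕ)) * (if (i : ℕ) = ((j : ℕ) + 1) % n then (if (j : ℕ) = n - 1 then a else 1) else 0) =
      (if (i : ℕ) = ((j : ℕ) + 1) % n then (if (j : ℕ) = n - 1 then a else 1) else 0) * lam ((j : ℕ) + 1)
    by_cases h : (i : ℕ) = ((j : ℕ) + 1) % n
    · rw [if_pos h]
      have hi : i = j + 1 := (hcond i j).mp h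
      rw [hi, hval]
      ring
    · rw [if_neg h, mul_zero, zero_mul]
  · rw [hF]
    ext i j
    rw [Matrix.mul_diagonal, Matrix.diagonal_mul]
    show (if (j : ℕ) = ((i : ℕ) + 1) % n then
        (lam ((j : ℕ)) + zdot) * (if (j : ℕ) = 0 then a⁻¹ else 1) else 0) * lam ((j : ℕ)) =
      lam ((i : ℕ) + 1) * (if (j : ℕ) = ((i : ℕ) + 1) % n then
        (lam ((j : ℕ)) + zdot) * (if (j : ℕ) = 0 then a⁻¹ else 1) else 0)
    by_cases h : (j : ℕ) = ((i : ℕ) + 1) % n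
    · rw [if_pos h]
      have hj : j = i + 1 := (hcond j i).mp h
      rw [hj, hval]
      ring
    · rw [if_neg h, mul_zero, zero_mul]
  · rw [hYX, hXY, hF, hH]
    ext i j
    rw [Matrix.sub_apply, Matrix.sub_apply]
    by_cases hij : i = j
    · subst hij
      simp only [Matrix.diagonal_apply_eq]
      ring
    · simp only [Matrix.diagonal_apply_ne _ hij]
end

section
/- Let f ∈ ℂ[h], λ ∈ S_f with exact period n ≥ 1 (i.e., λ(i+n) = λ(i) for all i, and λ(i) = λ(j) implies n | i − j), ż ∈ ℂ, a ∈ ℂ*. Then the module A'(λ, ż, a) on ℂ^n (with H e_i = λ(i) e_i, X e_i = e_{i+1} cyclically with X e_{n−1} = a e_0, Y e_i = (λ(i)+ż) e_{i−1} cyclically with Y e_0 = (λ(0)+ż)a^{−1} e_{n−1}) is simple: its only subspaces invariant under X, H, Y are 0 and ℂ^n. -/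
open Polynomial Matrix

/-- If `λ ∈ S_f` has exact period `n` and `a ≠ 0`, the module `A'(λ, ż, a)` on
`ℂⁿ` is simple: the only subspaces invariant under `X`, `H`, `Y` are `0` and `ℂⁿ`. -/
theorem A'_module_simple (f : Polynomial ℂ) (lam : ℤ → ℂ)
    (hlam : ∀ i : ℤ, f.eval (lam i) = lam (i + 1))
    (n : ℕ) (hn : 1 ≤ n) (hper : ∀ i : ℤ, lam (i + n) = lam i)
    (hexact : ∀ i j : ℤ, lam i = lam j → (n : ℤ) ∣ i - j)
    (zdot : ℂ) (a : ℂ) (ha : a ≠ 0) :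
    letI H : Matrix (Fin n) (Fin n) ℂ := Matrix.diagonal fun i => lam (i : ℕ)
    letI X : Matrix (Fin n) (Fin n) ℂ :=
      Matrix.of fun i j =>
        if (i : ℕ) = ((j : ℕ) + 1) % n then (if (j : ℕ) = n - 1 then a else 1) else 0
    letI Y : Matrix (Fin n) (Fin n) ℂ :=
      Matrix.of fun i j =>
        if (j : ℕ) = ((i : ℕ) + 1) % n then
          (lam (j : ℕ) + zdot) * (if (j : ℕ) = 0 then a⁻¹ else 1) else 0
    ∀ W : Submodule ℂ (Fin n → ℂ),
      (∀ v ∈ W, X.mulVec v ∈ W) → (∀ v ∈ W, H.mulVec v ∈ W) →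
      (∀ v ∈ W, Y.mulVec v ∈ W) → W = ⊥ ∨ W = ⊤ := by
  intro W hXW hHW hYW
  by_cases hbot : W = ⊥
  · exact Or.inl hbot
  right
  set d : Fin n → ℂ := fun k => lam (k : ℕ) with hd
  -- d is injective
  have hdinj : Function.Injective d := by
    intro k l hkl
    obtain ⟨c, hc⟩ := hexact (k : ℕ) (l : ℕ) hkl
    have hk := k.isLt; have hl := l.isLt
    have hb1 : ((k:ℕ):ℤ) < n := by exact_mod_cast hk
    have hb2 : ((l:ℕ):ℤ) < n := by exact_mod_cast hl
    have hb3 : (0:ℤ) ≤ ((k:ℕ):ℤ) := Int.ofNat_nonneg _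
    have hb4 : (0:ℤ) ≤ ((l:ℕ):ℤ) := Int.ofNat_nonneg _
    have hn' : (1:ℤ) ≤ n := by exact_mod_cast hn
    have hc0 : c = 0 := by
      rcases lt_trichotomy c 0 with h | h | h
      · nlinarith [mul_le_mul_of_nonneg_left (show c ≤ -1 by omega)
          (show (0:ℤ) ≤ n by linarith)]
      · exact h
      · nlinarith [mul_le_mul_of_nonneg_left (show (1:ℤ) ≤ c by omega)
          (show (0:ℤ) ≤ n by linarith)]
    subst hc0
    have : ((k:ℕ):ℤ) = ((l:ℕ):ℤ) := by
      have := hc; push_cast at this ⊢; linarith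
    exact Fin.ext (by exact_mod_cast this)
  -- H acts diagonally
  have hHact : ∀ v : Fin n → ℂ,
      (Matrix.diagonal fun i : Fin n => lam ((i : ℕ) : ℤ)).mulVec v = fun k => d k * v k := by
    intro v; funext k; simp [mulVec_diagonal, hd]
  -- polynomial trick: products of (H - d j) stay in W
  have key : ∀ (v : Fin n → ℂ), v ∈ W → ∀ S : Finset (Fin n),
      (fun k => (∏ j ∈ S, (d k - d j)) * v k) ∈ W := by
    intro v hv S
    induction S using Finset.induction with
    | empty => simpa using hv
    | insert _ _ hj ih =>
      rename_i j S'
      have h1 : (Matrix.diagonal fun i : Fin n => lam ((i : ℕ) : ℤ)).mulVec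
            (fun k => (∏ j ∈ S', (d k - d j)) * v k) -
          d j • (fun k => (∏ j ∈ S', (d k - d j)) * v k) ∈ W :=
        W.sub_mem (hHW _ ih) (W.smul_mem _ ih)
      convert h1 using 1
      funext k
      rw [hHact]
      simp [Finset.prod_insert hj]
      ring
  -- find a standard basis vector in W
  obtain ⟨v, hvW, hv0⟩ := (Submodule.ne_bot_iff W).mp hbot
  obtain ⟨i, hvi⟩ := Function.ne_iff.mp hv0
  have hsingle : Pi.single i (1:ℂ) ∈ W := by
    have hw := key v hvW (Finset.univ.erase i)
    set c : ℂ := ∏ j ∈ Finset.univ.erase i, (d i - d j) with hc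
    have hcne : c ≠ 0 := by
      rw [hc]
      apply Finset.prod_ne_zero_iff.mpr
      intro j hj
      have : j ≠ i := Finset.ne_of_mem_erase hj
      exact sub_ne_zero.mpr fun h => this (hdinj h.symm)
    have heq : (fun k => (∏ j ∈ Finset.univ.erase i, (d k - d j)) * v k)
        = (c * v i) • (Pi.single i 1 : Fin n → ℂ) := by
      funext k
      by_cases hk : k = i
      · subst hk; simp [Pi.single_eq_same, hc]
      · have hkm : k ∈ Finset.univ.erase i := Finset.mem_erase.mpr ⟨hk, Finset.mem_univ k⟩
        rw [Finset.prod_eq_zero hkm (sub_self (d k)), zero_mul]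
        simp [Pi.single_eq_of_ne hk]
    rw [heq] at hw
    have := W.smul_mem (c * v i)⁻¹ hw
    rwa [smul_smul, inv_mul_cancel₀ (mul_ne_zero hcne (by simpa using hvi)), one_smul] at this
  -- X cycles basis vectors
  have hnpos : 0 < n := hn
  set succ : Fin n → Fin n := fun j => ⟨((j:ℕ) + 1) % n, Nat.mod_lt _ hnpos⟩ with hsucc
  have hstep : ∀ j : Fin n, Pi.single j (1:ℂ) ∈ W → Pi.single (succ j) (1:ℂ) ∈ W := by
    intro j hj
    have hx := hXW _ hj
    set b : ℂ := if (j : ℕ) = n - 1 then a else 1 with hb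
    have hbne : b ≠ 0 := by
      rw [hb]; split <;> simp [ha]
    have heq : (Matrix.of fun i k : Fin n =>
          if (i : ℕ) = ((k : ℕ) + 1) % n then (if (k : ℕ) = n - 1 then a else 1) else 0).mulVec
          (Pi.single j (1:ℂ)) = b • (Pi.single (succ j) 1 : Fin n → ℂ) := by
      funext k
      rw [mulVec_single]
      by_cases hk : k = succ j
      · subst hk
        simp [hsucc, Pi.single_eq_same, hb]
      · have hk' : (k:ℕ) ≠ ((j:ℕ)+1) % n := by
          intro h; exact hk (Fin.ext h)
        simp [hk', Pi.single_eq_of_ne hk]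
    rw [heq] at hx
    have := W.smul_mem b⁻¹ hx
    rwa [smul_smul, inv_mul_cancel₀ hbne, one_smul] at this
  have hiter : ∀ m : ℕ, Pi.single (succ^[m] i) (1:ℂ) ∈ W := by
    intro m
    induction m with
    | zero => simpa using hsingle
    | succ m ih =>
      rw [Function.iterate_succ_apply']
      exact hstep _ ih
  have hval : ∀ m : ℕ, ((succ^[m] i : Fin n) : ℕ) = ((i:ℕ) + m) % n := by
    intro m
    induction m with
    | zero => simp [Nat.mod_eq_of_lt i.isLt]
    | succ m ih =>
      rw [Function.iterate_succ_apply']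
      show (((succ^[m] i : Fin n) : ℕ) + 1) % n = _
      rw [ih, ← Nat.add_assoc]
      exact ((Nat.mod_modEq ((i:ℕ) + m) n).add_right 1)
  have hall : ∀ k : Fin n, Pi.single k (1:ℂ) ∈ W := by
    intro k
    have hk := k.isLt; have hi := i.isLt
    have hkk : succ^[n - (i:ℕ) + (k:ℕ)] i = k := by
      apply Fin.ext
      rw [hval]
      have h1 : (i:ℕ) + (n - (i:ℕ) + (k:ℕ)) = n + (k:ℕ) := by omega
      rw [h1, Nat.add_mod_left, Nat.mod_eq_of_lt hk]
    have := hiter (n - (i:ℕ) + (k:ℕ))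
    rwa [hkk] at this
  -- conclude W = ⊤
  rw [eq_top_iff]
  intro w _
  have hw : w = ∑ k, w k • (Pi.single k 1 : Fin n → ℂ) := by
    funext k
    simp [Finset.sum_apply, Pi.single_apply, Finset.sum_ite_eq' Finset.univ k]
  rw [hw]
  exact Submodule.sum_mem W fun k _ => W.smul_mem _ (hall k)
end

section
/- Let f ∈ ℂ be a constant polynomial, say f(h) = c. Then the generalized Heisenberg algebra H(f) has zero divisors: (h − c)·x = 0 while h − c ≠ 0 and x ≠ 0. -/
open Polynomial

/-- Defining relations of the generalized Heisenberg algebra `H(f)`: generators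
`x = ι 0`, `h = ι 1`, `y = ι 2` with `hx = x f(h)`, `yh = f(h) y`,
`yx − xy = f(h) − h`. -/
inductive GHARel (f : Polynomial ℂ) : FreeAlgebra ℂ (Fin 3) → FreeAlgebra ℂ (Fin 3) → Prop
  | hx : GHARel f (FreeAlgebra.ι ℂ 1 * FreeAlgebra.ι ℂ 0)
      (FreeAlgebra.ι ℂ 0 * aeval (FreeAlgebra.ι ℂ 1) f)
  | yh : GHARel f (FreeAlgebra.ι ℂ 2 * FreeAlgebra.ι ℂ 1)
      (aeval (FreeAlgebra.ι ℂ 1) f * FreeAlgebra.ι ℂ 2)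
  | comm : GHARel f (FreeAlgebra.ι ℂ 2 * FreeAlgebra.ι ℂ 0)
      (FreeAlgebra.ι ℂ 0 * FreeAlgebra.ι ℂ 2 + aeval (FreeAlgebra.ι ℂ 1) f
        - FreeAlgebra.ι ℂ 1)

/-- The generalized Heisenberg algebra `H(f)`. -/
abbrev GHA (f : Polynomial ℂ) := RingQuot (GHARel f)

noncomputable def GHA.x (f : Polynomial ℂ) : GHA f :=
  RingQuot.mkAlgHom ℂ (GHARel f) (FreeAlgebra.ι ℂ 0)
noncomputable def GHA.h (f : Polynomial ℂ) : GHA f :=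
  RingQuot.mkAlgHom ℂ (GHARel f) (FreeAlgebra.ι ℂ 1)
noncomputable def GHA.y (f : Polynomial ℂ) : GHA f :=
  RingQuot.mkAlgHom ℂ (GHARel f) (FreeAlgebra.ι ℂ 2)

section Aux

-- a 2×2 matrix representation of `H(C c)`:
-- `x ↦ E₁₁`, `h ↦ c•1 + E₁₂`, `y ↦ E₁₂`.
private noncomputable def repF (c : ℂ) : FreeAlgebra ℂ (Fin 3) →ₐ[ℂ] Matrix (Fin 2) (Fin 2) ℂ :=
  FreeAlgebra.lift ℂ
    (![!![1,0;0,0], algebraMap ℂ _ c + !![0,1;0,0], !![0,1;0,0]])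

private lemma EX : (!![0,1;0,0] : Matrix (Fin 2) (Fin 2) ℂ) * !![1,0;0,0] = 0 := by
  ext i j; fin_cases i <;> fin_cases j <;> simp [Matrix.mul_apply, Fin.sum_univ_two]

private lemma EE : (!![0,1;0,0] : Matrix (Fin 2) (Fin 2) ℂ) * !![0,1;0,0] = 0 := by
  ext i j; fin_cases i <;> fin_cases j <;> simp [Matrix.mul_apply, Fin.sum_univ_two]

private lemma XE : (!![1,0;0,0] : Matrix (Fin 2) (Fin 2) ℂ) * !![0,1;0,0] = !![0,1;0,0] := by
  ext i j; fin_cases i <;> fin_cases j <;> simp [Matrix.mul_apply, Fin.sum_univ_two]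

private lemma repF_rel (c : ℂ) : ∀ ⦃a b : FreeAlgebra ℂ (Fin 3)⦄, GHARel (C c) a b →
    repF c a = repF c b := by
  rintro a b ⟨⟩ <;>
    simp only [map_mul, map_add, map_sub, aeval_C, AlgHom.commutes, repF,
      FreeAlgebra.lift_ι_apply, Matrix.cons_val_zero, Matrix.cons_val_one, Matrix.head_cons, Matrix.cons_val_two, Matrix.tail_cons]
  · rw [add_mul, EX, add_zero, Algebra.commutes]
  · rw [mul_add, EE, add_zero, Algebra.commutes]
  · rw [EX, XE]; abel
end Aux

/-- If `f = c` is a constant polynomial, then `H(f)` has zero divisors: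
`(h − c) x = 0` while `h − c ≠ 0` and `x ≠ 0`. -/
theorem GHA_const_zero_divisors (c : ℂ) :
    (GHA.h (C c) - algebraMap ℂ (GHA (C c)) c) * GHA.x (C c) = 0 ∧
    GHA.h (C c) - algebraMap ℂ (GHA (C c)) c ≠ 0 ∧ GHA.x (C c) ≠ 0 := by
  set φ : GHA (C c) →ₐ[ℂ] Matrix (Fin 2) (Fin 2) ℂ :=
    RingQuot.liftAlgHom ℂ ⟨repF c, repF_rel c⟩ with hφ
  have φx : φ (GHA.x (C c)) = !![1,0;0,0] := by
    simp [hφ, GHA.x, RingQuot.liftAlgHom_mkAlgHom_apply, repF, FreeAlgebra.lift_ι_apply]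
  have φh : φ (GHA.h (C c)) = algebraMap ℂ _ c + !![0,1;0,0] := by
    simp [hφ, GHA.h, RingQuot.liftAlgHom_mkAlgHom_apply, repF, FreeAlgebra.lift_ι_apply]
  refine ⟨?_, ?_, ?_⟩
  · have key : GHA.h (C c) * GHA.x (C c) = GHA.x (C c) * algebraMap ℂ (GHA (C c)) c := by
      have := RingQuot.mkAlgHom_rel ℂ (GHARel.hx (f := C c))
      simpa [GHA.h, GHA.x, aeval_C, map_mul] using this
    rw [sub_mul, key, Algebra.commutes, sub_self]
  · intro hzero
    have : φ (GHA.h (C c) - algebraMap ℂ (GHA (C c)) c) = 0 := by rw [hzero]; simp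
    rw [map_sub, φh, AlgHom.commutes, add_sub_cancel_left] at this
    have := congrFun (congrFun this 0) 1
    simp at this
  · intro hzero
    have : φ (GHA.x (C c)) = 0 := by rw [hzero]; simp
    rw [φx] at this
    have := congrFun (congrFun this 0) 0
    simp at this
end

section
/- Let f₁, f₂ ∈ ℂ[h] and suppose f₂(a·h + c) = a·f₁(h) + c as polynomials, for some a ∈ ℂ*, c ∈ ℂ. Then the generalized Heisenberg algebras H(f₁) and H(f₂) are isomorphic as ℂ-algebras; explicitly, there is an isomorphism σ : H(f₂) → H(f₁) with σ(x) = a·x, σ(h) = a·h + c, σ(y) = y. -/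
open Polynomial

lemma GHA.rel_hx (f : Polynomial ℂ) :
    GHA.h f * GHA.x f = GHA.x f * aeval (GHA.h f) f := by
  have := RingQuot.mkAlgHom_rel ℂ (GHARel.hx (f := f))
  simpa [GHA.h, GHA.x, map_mul, ← Polynomial.aeval_algHom_apply] using this

lemma GHA.rel_yh (f : Polynomial ℂ) :
    GHA.y f * GHA.h f = aeval (GHA.h f) f * GHA.y f := by
  have := RingQuot.mkAlgHom_rel ℂ (GHARel.yh (f := f))
  simpa [GHA.h, GHA.y, map_mul, ← Polynomial.aeval_algHom_apply] using this

lemma GHA.rel_comm (f : Polynomial ℂ) :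
    GHA.y f * GHA.x f = GHA.x f * GHA.y f + aeval (GHA.h f) f - GHA.h f := by
  have := RingQuot.mkAlgHom_rel ℂ (GHARel.comm (f := f))
  simpa [GHA.h, GHA.x, GHA.y, map_mul, map_add, map_sub,
    ← Polynomial.aeval_algHom_apply] using this

lemma aeval_shift (f₁ f₂ : Polynomial ℂ) (a c : ℂ)
    (hf : f₂.comp (C a * X + C c) = C a * f₁ + C c) :
    aeval (a • GHA.h f₁ + algebraMap ℂ (GHA f₁) c) f₂
      = a • aeval (GHA.h f₁) f₁ + algebraMap ℂ (GHA f₁) c := by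
  have h1 : a • GHA.h f₁ + algebraMap ℂ (GHA f₁) c
      = aeval (GHA.h f₁) (C a * X + C c) := by
    simp [Algebra.smul_def]
  rw [h1, ← aeval_comp, hf]
  simp [Algebra.smul_def]

-- purely algebraic identities in any algebra
section generic
variable {A : Type*} [Ring A] [Algebra ℂ A] (x h y F : A) (a c : ℂ)

lemma gen_hx (rel : h * x = x * F) :
    (a • h + algebraMap ℂ A c) * (a • x) = (a • x) * (a • F + algebraMap ℂ A c) := by
  simp only [add_mul, mul_add, smul_mul_assoc, mul_smul_comm, smul_smul, rel,
    Algebra.algebraMap_eq_smul_one, one_mul, mul_one, smul_add]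
  module

lemma gen_yh (rel : y * h = F * y) :
    y * (a • h + algebraMap ℂ A c) = (a • F + algebraMap ℂ A c) * y := by
  simp only [add_mul, mul_add, smul_mul_assoc, mul_smul_comm, rel,
    Algebra.algebraMap_eq_smul_one, one_mul, mul_one]

lemma gen_comm (rel : y * x = x * y + F - h) :
    y * (a • x) = (a • x) * y + (a • F + algebraMap ℂ A c)
      - (a • h + algebraMap ℂ A c) := by
  simp only [smul_mul_assoc, mul_smul_comm, rel, smul_add, smul_sub]
  abel

end generic

noncomputable def sigmaFree (f₁ : Polynomial ℂ) (a c : ℂ) :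
    FreeAlgebra ℂ (Fin 3) →ₐ[ℂ] GHA f₁ :=
  FreeAlgebra.lift ℂ
    ![a • GHA.x f₁, a • GHA.h f₁ + algebraMap ℂ (GHA f₁) c, GHA.y f₁]

lemma sigmaFree_ι0 (f₁ : Polynomial ℂ) (a c : ℂ) :
    sigmaFree f₁ a c (FreeAlgebra.ι ℂ 0) = a • GHA.x f₁ := by
  simp [sigmaFree]

lemma sigmaFree_ι1 (f₁ : Polynomial ℂ) (a c : ℂ) :
    sigmaFree f₁ a c (FreeAlgebra.ι ℂ 1) = a • GHA.h f₁ + algebraMap ℂ (GHA f₁) c := by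
  simp [sigmaFree]

lemma sigmaFree_ι2 (f₁ : Polynomial ℂ) (a c : ℂ) :
    sigmaFree f₁ a c (FreeAlgebra.ι ℂ 2) = GHA.y f₁ := by
  simp [sigmaFree]

lemma sigmaFree_rel (f₁ f₂ : Polynomial ℂ) (a c : ℂ)
    (hf : f₂.comp (C a * X + C c) = C a * f₁ + C c) :
    ∀ ⦃u v⦄, GHARel f₂ u v → sigmaFree f₁ a c u = sigmaFree f₁ a c v := by
  intro u v r
  have key : (sigmaFree f₁ a c) (aeval (FreeAlgebra.ι ℂ 1) f₂)
      = a • aeval (GHA.h f₁) f₁ + algebraMap ℂ (GHA f₁) c := by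
    rw [← Polynomial.aeval_algHom_apply, sigmaFree_ι1]
    exact aeval_shift f₁ f₂ a c hf
  cases r with
  | hx =>
      rw [map_mul, map_mul, key, sigmaFree_ι0, sigmaFree_ι1]
      exact gen_hx _ _ _ a c (GHA.rel_hx f₁)
  | yh =>
      rw [map_mul, map_mul, key, sigmaFree_ι1, sigmaFree_ι2]
      exact gen_yh _ _ _ a c (GHA.rel_yh f₁)
  | comm =>
      rw [map_mul, map_sub, map_add, map_mul, key, sigmaFree_ι0, sigmaFree_ι1,
        sigmaFree_ι2]
      exact gen_comm _ _ _ _ a c (GHA.rel_comm f₁)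

noncomputable def sigmaHom (f₁ f₂ : Polynomial ℂ) (a c : ℂ)
    (hf : f₂.comp (C a * X + C c) = C a * f₁ + C c) :
    GHA f₂ →ₐ[ℂ] GHA f₁ :=
  RingQuot.liftAlgHom ℂ ⟨sigmaFree f₁ a c, sigmaFree_rel f₁ f₂ a c hf⟩

lemma sigmaHom_x (f₁ f₂ : Polynomial ℂ) (a c : ℂ)
    (hf : f₂.comp (C a * X + C c) = C a * f₁ + C c) :
    sigmaHom f₁ f₂ a c hf (GHA.x f₂) = a • GHA.x f₁ := by
  rw [sigmaHom, GHA.x, RingQuot.liftAlgHom_mkAlgHom_apply, sigmaFree_ι0]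

lemma sigmaHom_h (f₁ f₂ : Polynomial ℂ) (a c : ℂ)
    (hf : f₂.comp (C a * X + C c) = C a * f₁ + C c) :
    sigmaHom f₁ f₂ a c hf (GHA.h f₂) = a • GHA.h f₁ + algebraMap ℂ (GHA f₁) c := by
  rw [sigmaHom, GHA.h, RingQuot.liftAlgHom_mkAlgHom_apply, sigmaFree_ι1]

lemma sigmaHom_y (f₁ f₂ : Polynomial ℂ) (a c : ℂ)
    (hf : f₂.comp (C a * X + C c) = C a * f₁ + C c) :
    sigmaHom f₁ f₂ a c hf (GHA.y f₂) = GHA.y f₁ := by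
  rw [sigmaHom, GHA.y, RingQuot.liftAlgHom_mkAlgHom_apply, sigmaFree_ι2]

lemma GHA.algHom_ext (f : Polynomial ℂ) {B : Type*} [Semiring B] [Algebra ℂ B]
    (φ ψ : GHA f →ₐ[ℂ] B) (h0 : φ (GHA.x f) = ψ (GHA.x f))
    (h1 : φ (GHA.h f) = ψ (GHA.h f)) (h2 : φ (GHA.y f) = ψ (GHA.y f)) : φ = ψ := by
  apply RingQuot.ringQuot_ext'
  apply FreeAlgebra.hom_ext
  funext i
  fin_cases i
  · exact h0
  · exact h1
  · exact h2

/-- If `f₂(a·h + c) = a·f₁(h) + c` for some `a ≠ 0`, `c ∈ ℂ`, then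
`H(f₁) ≅ H(f₂)` via `σ : H(f₂) → H(f₁)` with `σ(x) = a x`, `σ(h) = a h + c`,
`σ(y) = y`. -/
theorem GHA_iso_of_affine (f₁ f₂ : Polynomial ℂ) (a c : ℂ) (ha : a ≠ 0)
    (hf : f₂.comp (C a * X + C c) = C a * f₁ + C c) :
    ∃ σ : GHA f₂ ≃ₐ[ℂ] GHA f₁,
      σ (GHA.x f₂) = a • GHA.x f₁ ∧
      σ (GHA.h f₂) = a • GHA.h f₁ + algebraMap ℂ (GHA f₁) c ∧
      σ (GHA.y f₂) = GHA.y f₁ := by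
  have hf' : f₁.comp (C a⁻¹ * X + C (-(a⁻¹ * c))) = C a⁻¹ * f₂ + C (-(a⁻¹ * c)) := by
    have h2 : (f₂.comp (C a * X + C c)).comp (C a⁻¹ * X + C (-(a⁻¹ * c)))
        = (C a * f₁ + C c).comp (C a⁻¹ * X + C (-(a⁻¹ * c))) := by rw [hf]
    rw [Polynomial.comp_assoc] at h2
    have h3 : (C a * X + C c).comp (C a⁻¹ * X + C (-(a⁻¹ * c))) = X := by
      simp only [add_comp, mul_comp, C_comp, X_comp, mul_add, ← mul_assoc, ← C_mul,
        mul_inv_cancel₀ ha, C_1, one_mul]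
      rw [add_assoc, ← C_add]
      have : a * -(a⁻¹ * c) + c = 0 := by field_simp; ring
      rw [this, C_0, add_zero]
    rw [h3, comp_X] at h2
    simp only [add_comp, mul_comp, C_comp] at h2
    rw [h2]
    simp only [mul_add, ← mul_assoc, ← C_mul, inv_mul_cancel₀ ha, C_1, one_mul, C_neg]
    ring
  refine ⟨AlgEquiv.ofAlgHom (sigmaHom f₁ f₂ a c hf)
    (sigmaHom f₂ f₁ a⁻¹ (-(a⁻¹ * c)) hf') ?_ ?_,
    sigmaHom_x f₁ f₂ a c hf, sigmaHom_h f₁ f₂ a c hf, sigmaHom_y f₁ f₂ a c hf⟩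
  · apply GHA.algHom_ext <;>
      · simp only [AlgHom.coe_comp, Function.comp_apply, AlgHom.id_apply,
          sigmaHom_x, sigmaHom_h, sigmaHom_y, map_add, map_smul, smul_add, smul_smul,
          Algebra.algebraMap_eq_smul_one, map_one]
        try (match_scalars <;> (field_simp; try ring))
  · apply GHA.algHom_ext <;>
      · simp only [AlgHom.coe_comp, Function.comp_apply, AlgHom.id_apply,
          sigmaHom_x, sigmaHom_h, sigmaHom_y, map_add, map_smul, smul_add, smul_smul,
          Algebra.algebraMap_eq_smul_one, map_one]
        try (match_scalars <;> (field_simp; try ring))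
end

section
/- Let w ∈ ℂ be a primitive l-th root of unity (l ≥ 1), c ∈ ℂ, and f(h) = w·h + (1−w)·c. Then in the generalized Heisenberg algebra H(f), the elements x^l, y^l, and (h − c)^l are central. -/
open Polynomial

lemma GHA.central_of_gens (f : Polynomial ℂ) (z : GHA f)
    (h0 : GHA.x f * z = z * GHA.x f)
    (h1 : GHA.h f * z = z * GHA.h f)
    (h2 : GHA.y f * z = z * GHA.y f) :
    ∀ u : GHA f, u * z = z * u := by
  intro u
  obtain ⟨a, rfl⟩ := RingQuot.mkAlgHom_surjective ℂ (GHARel f) u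
  induction a with
  | grade0 r => simp [AlgHom.commutes, Algebra.commutes]
  | grade1 i =>
    fin_cases i
    · exact h0
    · exact h1
    · exact h2
  | mul a b ha hb =>
    rw [map_mul, mul_assoc, hb, ← mul_assoc, ha, mul_assoc]
  | add a b ha hb =>
    rw [map_add, add_mul, mul_add, ha, hb]

section Aux

variable (w c : ℂ)

local notation "F" => (C w * X + C ((1 - w) * c) : Polynomial ℂ)


lemma rel_hx : GHA.h F * GHA.x F
    = w • (GHA.x F * GHA.h F) + ((1 - w) * c) • GHA.x F := by
  have h1 := RingQuot.mkAlgHom_rel ℂ (GHARel.hx (f := F))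
  simp only [map_add, map_mul, map_sub, map_one, aeval_C, aeval_X, AlgHom.commutes] at h1
  simp only [GHA.x, GHA.h]
  rw [h1]
  simp only [Algebra.algebraMap_eq_smul_one, mul_smul_comm, smul_mul_assoc, smul_smul,
    mul_one, one_mul, mul_add, add_mul, sub_mul, mul_sub, smul_sub, smul_add, sub_smul, one_smul]
  module

lemma rel_yh : GHA.y F * GHA.h F
    = w • (GHA.h F * GHA.y F) + ((1 - w) * c) • GHA.y F := by
  have h1 := RingQuot.mkAlgHom_rel ℂ (GHARel.yh (f := F))
  simp only [map_add, map_mul, map_sub, map_one, aeval_C, aeval_X, AlgHom.commutes] at h1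
  simp only [GHA.y, GHA.h]
  rw [h1]
  simp only [Algebra.algebraMap_eq_smul_one, mul_smul_comm, smul_mul_assoc, smul_smul,
    mul_one, one_mul, mul_add, add_mul, sub_mul, mul_sub, smul_sub, smul_add, sub_smul, one_smul]
  module

lemma rel_yx : GHA.y F * GHA.x F
    = GHA.x F * GHA.y F + (w - 1) • (GHA.h F - algebraMap ℂ (GHA F) c) := by
  have h1 := RingQuot.mkAlgHom_rel ℂ (GHARel.comm (f := F))
  simp only [map_add, map_mul, map_sub, map_one, aeval_C, aeval_X, AlgHom.commutes] at h1
  simp only [GHA.y, GHA.x, GHA.h]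
  rw [h1]
  simp only [Algebra.algebraMap_eq_smul_one, mul_smul_comm, smul_mul_assoc, smul_smul,
    mul_one, one_mul, mul_add, add_mul, sub_mul, mul_sub, smul_sub, smul_add, sub_smul, one_smul]
  module

end Aux

section Aux2

variable (w c : ℂ)

local notation "F" => (C w * X + C ((1 - w) * c) : Polynomial ℂ)
local notation "gg" => (GHA.h F - algebraMap ℂ (GHA F) c)

lemma rel_gx : gg * GHA.x F = w • (GHA.x F * gg) := by
  rw [sub_mul (GHA.h F) (algebraMap ℂ (GHA F) c) (GHA.x F), rel_hx]
  simp only [Algebra.algebraMap_eq_smul_one, smul_mul_assoc, one_mul, mul_sub, mul_one,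
    mul_smul_comm, smul_sub, smul_smul]
  module

lemma rel_yg : GHA.y F * gg = w • (gg * GHA.y F) := by
  rw [mul_sub (GHA.y F) (GHA.h F) (algebraMap ℂ (GHA F) c), rel_yh]
  simp only [Algebra.algebraMap_eq_smul_one, smul_mul_assoc, one_mul, sub_mul, mul_one,
    mul_smul_comm, smul_sub, smul_smul]
  module

lemma rel_gxk (k : ℕ) : gg * GHA.x F ^ k = w ^ k • (GHA.x F ^ k * gg) := by
  induction k with
  | zero => simp
  | succ k ih =>
    rw [pow_succ, ← mul_assoc, ih, smul_mul_assoc, mul_assoc, rel_gx]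
    simp only [mul_smul_comm, smul_smul, ← mul_assoc, ← pow_succ]

lemma rel_gkx (k : ℕ) : gg ^ k * GHA.x F = w ^ k • (GHA.x F * gg ^ k) := by
  induction k with
  | zero => simp
  | succ k ih =>
    rw [pow_succ, mul_assoc, rel_gx, mul_smul_comm, ← mul_assoc, ih, smul_mul_assoc,
      smul_smul, mul_assoc, ← pow_succ]
    module

lemma rel_ygk (k : ℕ) : GHA.y F * gg ^ k = w ^ k • (gg ^ k * GHA.y F) := by
  induction k with
  | zero => simp
  | succ k ih =>
    rw [pow_succ', ← mul_assoc, rel_yg, smul_mul_assoc, mul_assoc, ih, mul_smul_comm,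
      smul_smul, ← mul_assoc, ← pow_succ']

lemma rel_ykg (k : ℕ) : GHA.y F ^ k * gg = w ^ k • (gg * GHA.y F ^ k) := by
  induction k with
  | zero => simp
  | succ k ih =>
    rw [pow_succ, mul_assoc, rel_yg, mul_smul_comm, ← mul_assoc, ih, smul_mul_assoc,
      smul_smul, mul_assoc, ← pow_succ]
    module

lemma rel_yxk (k : ℕ) : GHA.y F * GHA.x F ^ (k + 1)
    = GHA.x F ^ (k + 1) * GHA.y F + (w ^ (k + 1) - 1) • (GHA.x F ^ k * gg) := by
  induction k with
  | zero => simpa using rel_yx w c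
  | succ k ih =>
    rw [pow_succ, ← mul_assoc, ih, add_mul, smul_mul_assoc, mul_assoc, rel_yx,
      mul_assoc, rel_gx]
    simp only [mul_add, mul_smul_comm, smul_smul, smul_add, ← mul_assoc, ← pow_succ]
    module

lemma rel_ykx (k : ℕ) : GHA.y F ^ (k + 1) * GHA.x F
    = GHA.x F * GHA.y F ^ (k + 1) + (w ^ (k + 1) - 1) • (gg * GHA.y F ^ k) := by
  induction k with
  | zero => simpa using rel_yx w c
  | succ k ih =>
    rw [pow_succ', mul_assoc, ih, mul_add, ← mul_assoc, rel_yx, mul_smul_comm,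
      ← mul_assoc, rel_yg]
    simp only [add_mul, smul_mul_assoc, mul_smul_comm, smul_smul, mul_assoc, ← pow_succ']
    module

end Aux2


/-- If `w` is a primitive `l`-th root of unity (`l ≥ 1`) and
`f(h) = w·h + (1−w)·c`, then `x^l`, `y^l` and `(h − c)^l` are central in `H(f)`. -/
theorem GHA_central_powers (l : ℕ) (hl : 1 ≤ l) (w : ℂ) (hw : IsPrimitiveRoot w l)
    (c : ℂ) :
    letI f : Polynomial ℂ := C w * X + C ((1 - w) * c)
    ∀ u : GHA f,
      u * GHA.x f ^ l = GHA.x f ^ l * u ∧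
      u * GHA.y f ^ l = GHA.y f ^ l * u ∧
      u * (GHA.h f - algebraMap ℂ (GHA f) c) ^ l
        = (GHA.h f - algebraMap ℂ (GHA f) c) ^ l * u := by
  have hwl : w ^ l = 1 := hw.pow_eq_one
  obtain ⟨k, rfl⟩ : ∃ k, l = k + 1 := ⟨l - 1, (Nat.succ_pred_eq_of_pos hl).symm⟩
  intro u
  refine ⟨GHA.central_of_gens _ _ ?_ ?_ ?_ u, GHA.central_of_gens _ _ ?_ ?_ ?_ u,
    GHA.central_of_gens _ _ ?_ ?_ ?_ u⟩
  · exact (Commute.refl _).pow_right (k + 1)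
  · have h1 : Commute
        (GHA.h (C w * X + C ((1 - w) * c)) -
          algebraMap ℂ (GHA (C w * X + C ((1 - w) * c))) c)
        (GHA.x (C w * X + C ((1 - w) * c)) ^ (k + 1)) := by
      have := rel_gxk w c (k + 1)
      rwa [hwl, one_smul] at this
    have h3 := h1.add_left (Algebra.commutes c _)
    rwa [sub_add_cancel] at h3
  · have := rel_yxk w c k
    rwa [hwl, sub_self, zero_smul, add_zero] at this
  · have := rel_ykx w c k
    rw [hwl, sub_self, zero_smul, add_zero] at this
    exact this.symm
  · have h1 : Commute
        (GHA.h (C w * X + C ((1 - w) * c)) -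
          algebraMap ℂ (GHA (C w * X + C ((1 - w) * c))) c)
        (GHA.y (C w * X + C ((1 - w) * c)) ^ (k + 1)) := by
      have := rel_ykg w c (k + 1)
      rw [hwl, one_smul] at this
      exact this.symm
    have h3 := h1.add_left (Algebra.commutes c _)
    rwa [sub_add_cancel] at h3
  · exact (Commute.refl _).pow_right (k + 1)
  · have := rel_gkx w c (k + 1)
    rw [hwl, one_smul] at this
    exact this.symm
  · exact ((Commute.refl _).sub_right (Algebra.commute_algebraMap_right c _)).pow_right (k + 1)
  · have := rel_ygk w c (k + 1)
    rwa [hwl, one_smul] at this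
end

section
/- Let f ∈ ℂ[h] with deg f ≥ 1 (f not constant), and let λ ∈ S_f with λ(i) + ż ≠ 0 for all i ∈ ℤ and λ not periodic (λ(i) = λ(i+m) for all i implies m = 0). Define an action of H(f) on ℂ[t, t^{−1}] by h·tⁱ = λ(i)tⁱ, x·tⁱ = t^{i+1}, y·tⁱ = (λ(i)+ż)t^{i−1}. Then every nonzero H(f)-submodule of ℂ[t,t^{−1}] equals the whole module, i.e., this module A(λ, ż) is simple. -/
open Polynomial

open Polynomial Finsupp

private lemma aux_simple (f : Polynomial ℂ)
    (lam : ℤ → ℂ) (hlam : ∀ i : ℤ, f.eval (lam i) = lam (i + 1))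
    (zdot : ℂ) (hz : ∀ i : ℤ, lam i + zdot ≠ 0)
    (hnp : ∀ m : ℤ, (∀ i : ℤ, lam i = lam (i + m)) → m = 0)
    (X H Y : (ℤ →₀ ℂ) →ₗ[ℂ] (ℤ →₀ ℂ))
    (hXs : ∀ (i : ℤ) (c : ℂ), X (Finsupp.single i c) = Finsupp.single (i+1) c)
    (hHs : ∀ (i : ℤ) (c : ℂ), H (Finsupp.single i c) = Finsupp.single i (lam i * c))
    (hYs : ∀ (i : ℤ) (c : ℂ), Y (Finsupp.single i c) = Finsupp.single (i-1) ((lam i + zdot) * c))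
    (W : Submodule ℂ (ℤ →₀ ℂ)) (hW : W ≠ ⊥)
    (hXW : ∀ v ∈ W, X v ∈ W) (hHW : ∀ v ∈ W, H v ∈ W) (hYW : ∀ v ∈ W, Y v ∈ W) :
    W = ⊤ := by
  have Hcoord : ∀ (v : ℤ →₀ ℂ) (n : ℤ), H v n = lam n * v n := by
    intro v
    induction v using Finsupp.induction_linear with
    | zero => simp
    | add a b ha hb => intro n; simp [map_add, ha, hb, mul_add]
    | single a b =>
      intro n
      rw [hHs]
      rw [Finsupp.single_apply, Finsupp.single_apply]
      by_cases h : a = n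
      · subst h; simp
      · rw [if_neg h, if_neg h, mul_zero]
  have Ycoord : ∀ (v : ℤ →₀ ℂ) (n : ℤ), Y v n = (lam (n+1) + zdot) * v (n+1) := by
    intro v
    induction v using Finsupp.induction_linear with
    | zero => simp
    | add a b ha hb => intro n; simp [map_add, ha, hb, mul_add]
    | single a b =>
      intro n
      rw [hYs]
      rw [Finsupp.single_apply, Finsupp.single_apply]
      by_cases h : a = n + 1
      · subst h
        rw [if_pos (by omega), if_pos rfl]
      · have h' : ¬ (a - 1 = n) := by omega
        rw [if_neg h', if_neg h, mul_zero]
  have Yiter : ∀ (k : ℕ) (v : ℤ →₀ ℂ) (n : ℤ), (Y^[k] v) n =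
      (∏ t ∈ Finset.range k, (lam (n + 1 + t) + zdot)) * v (n + k) := by
    intro k
    induction k with
    | zero => intro v n; simp
    | succ k ih =>
      intro v n
      rw [Function.iterate_succ_apply, ih, Ycoord, Finset.prod_range_succ]
      have e1 : n + (k:ℤ) + 1 = n + ((k:ℕ)+1 : ℕ) := by push_cast; ring
      have e2 : n + 1 + (k:ℤ) = n + (k:ℤ) + 1 := by ring
      rw [e2, ← e1]
      ring
  have Cne : ∀ (k : ℕ) (n : ℤ), (∏ t ∈ Finset.range k, (lam (n + 1 + t) + zdot)) ≠ 0 :=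
    fun k n => Finset.prod_ne_zero_iff.mpr fun t _ => hz _
  have YWk : ∀ (k : ℕ), ∀ v ∈ W, Y^[k] v ∈ W := by
    intro k
    induction k with
    | zero => intro v hv; simpa using hv
    | succ k ih =>
      intro v hv
      rw [Function.iterate_succ_apply]
      exact ih _ (hYW v hv)
  have hkey : ∀ i j : ℤ, i ≠ j → ∃ k : ℕ, lam (i - k) ≠ lam (j - k) := by
    intro i j hij
    by_contra hcon
    push_neg at hcon
    have fwd : ∀ k : ℕ, lam (i + k) = lam (j + k) := by
      intro k
      induction k with
      | zero => simpa using hcon 0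
      | succ k ih =>
        have e1 : i + ((k:ℕ)+1 : ℕ) = (i + k) + 1 := by push_cast; ring
        have e2 : j + ((k:ℕ)+1 : ℕ) = (j + k) + 1 := by push_cast; ring
        rw [e1, e2, ← hlam (i + k), ← hlam (j + k), ih]
    have hper : ∀ n : ℤ, lam n = lam (n + (j - i)) := by
      intro n
      rcases le_or_gt i n with h | h
      · obtain ⟨k, hk⟩ : ∃ k : ℕ, n = i + k := ⟨(n - i).toNat, by omega⟩
        have e : n + (j - i) = j + k := by omega
        rw [e, hk]; exact fwd k
      · obtain ⟨k, hk⟩ : ∃ k : ℕ, n = i - k := ⟨(i - n).toNat, by omega⟩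
        have e : n + (j - i) = j - k := by omega
        rw [e, hk]; exact hcon k
    have := hnp (j - i) hper
    omega
  have main : ∀ N : ℕ, ∀ v : ℤ →₀ ℂ, v.support.card ≤ N → v ∈ W → v ≠ 0 →
      ∃ i, Finsupp.single i (1:ℂ) ∈ W := by
    intro N
    induction N with
    | zero =>
      intro v hc _ hne
      exact absurd (Finsupp.support_eq_empty.mp (Finset.card_eq_zero.mp (Nat.le_zero.mp hc))) hne
    | succ N ih =>
      intro v hc hv hne
      by_cases h1 : v.support.card ≤ N
      · exact ih v h1 hv hne
      have hcardeq : v.support.card = N + 1 := by omega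
      by_cases hcard : v.support.card = 1
      · obtain ⟨a, ha⟩ := Finset.card_eq_one.mp hcard
        have hva : v a ≠ 0 := by
          have : a ∈ v.support := by rw [ha]; exact Finset.mem_singleton_self a
          exact Finsupp.mem_support_iff.mp this
        have hvs : v = Finsupp.single a (v a) := by
          ext n
          rw [Finsupp.single_apply]
          by_cases h : a = n
          · subst h; rw [if_pos rfl]
          · rw [if_neg h]
            exact Finsupp.notMem_support_iff.mp
              (by rw [ha]; exact fun hm => h (Finset.mem_singleton.mp hm).symm)
        refine ⟨a, ?_⟩
        have := W.smul_mem (v a)⁻¹ hv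
        rw [hvs] at hv
        have h2 := W.smul_mem (v a)⁻¹ hv
        rwa [Finsupp.smul_single' , inv_mul_cancel₀ hva] at h2
      · -- at least two support elements
        have h2 : 1 < v.support.card := by omega
        obtain ⟨i, hi, j, hj, hij⟩ := Finset.one_lt_card.mp h2
        obtain ⟨k, hk⟩ := hkey i j hij
        set w : ℤ →₀ ℂ := Y^[k] v with hw
        have hwW : w ∈ W := YWk k v hv
        have hwcoord : ∀ n : ℤ, w n =
            (∏ t ∈ Finset.range k, (lam (n + 1 + t) + zdot)) * v (n + k) :=
          fun n => Yiter k v n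
        set u : ℤ →₀ ℂ := H w - lam (j - k) • w with hu
        have huW : u ∈ W := W.sub_mem (hHW w hwW) (W.smul_mem _ hwW)
        have hucoord : ∀ n : ℤ, u n = (lam n - lam (j - k)) * w n := by
          intro n
          simp only [hu, Finsupp.sub_apply, Finsupp.smul_apply, smul_eq_mul, Hcoord]
          ring
        have hwi : w (i - k) ≠ 0 := by
          rw [hwcoord]
          have e : i - (k:ℤ) + k = i := by ring
          rw [e]
          exact mul_ne_zero (Cne k _) (Finsupp.mem_support_iff.mp hi)
        have hwj : w (j - k) ≠ 0 := by
          rw [hwcoord]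
          have e : j - (k:ℤ) + k = j := by ring
          rw [e]
          exact mul_ne_zero (Cne k _) (Finsupp.mem_support_iff.mp hj)
        have hune : u ≠ 0 := by
          intro h0
          have : u (i - k) = 0 := by rw [h0]; rfl
          rw [hucoord] at this
          exact (mul_ne_zero (sub_ne_zero_of_ne hk) hwi) this
        have hwsupp : w.support = v.support.image (fun n => n - (k:ℤ)) := by
          ext n
          simp only [Finsupp.mem_support_iff, Finset.mem_image]
          constructor
          · intro hn
            refine ⟨n + k, ?_, by ring⟩
            rw [hwcoord] at hn
            exact fun h => hn (by rw [h, mul_zero])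
          · rintro ⟨m, hm, rfl⟩
            rw [hwcoord]
            have e : m - (k:ℤ) + k = m := by ring
            rw [e]
            exact mul_ne_zero (Cne k _) hm
        have hucard : u.support.card ≤ N := by
          have hsub : u.support ⊆ w.support.erase (j - k) := by
            intro n hn
            rw [Finsupp.mem_support_iff, hucoord] at hn
            rw [Finset.mem_erase, Finsupp.mem_support_iff]
            constructor
            · intro h; rw [h] at hn; simp at hn
            · intro h; rw [h, mul_zero] at hn; exact hn rfl
          have c1 : u.support.card ≤ (w.support.erase (j - k)).card :=
            Finset.card_le_card hsub
          have c2 : (w.support.erase (j - k)).card < w.support.card :=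
            Finset.card_erase_lt_of_mem (Finsupp.mem_support_iff.mpr hwj)
          have c3 : w.support.card ≤ v.support.card := by
            rw [hwsupp]; exact Finset.card_image_le
          omega
        exact ih u hucard huW hune
  obtain ⟨v0, hv0W, hv0ne⟩ := (Submodule.ne_bot_iff W).mp hW
  obtain ⟨i0, hi0⟩ := main v0.support.card v0 le_rfl hv0W hv0ne
  have step_up : ∀ n : ℤ, Finsupp.single n (1:ℂ) ∈ W → Finsupp.single (n+1) (1:ℂ) ∈ W := by
    intro n h
    have := hXW _ h
    rwa [hXs] at this
  have step_down : ∀ n : ℤ, Finsupp.single n (1:ℂ) ∈ W → Finsupp.single (n-1) (1:ℂ) ∈ W := by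
    intro n h
    have h1 := hYW _ h
    rw [hYs] at h1
    have h2 := W.smul_mem (lam n + zdot)⁻¹ h1
    rwa [Finsupp.smul_single', mul_one, inv_mul_cancel₀ (hz n)] at h2
  have up : ∀ m : ℕ, Finsupp.single (i0 + m) (1:ℂ) ∈ W := by
    intro m
    induction m with
    | zero => simpa using hi0
    | succ m ih =>
      have e : i0 + ((m:ℕ)+1 : ℕ) = (i0 + m) + 1 := by push_cast; ring
      rw [e]; exact step_up _ ih
  have down : ∀ m : ℕ, Finsupp.single (i0 - m) (1:ℂ) ∈ W := by
    intro m
    induction m with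
    | zero => simpa using hi0
    | succ m ih =>
      have e : i0 - ((m:ℕ)+1 : ℕ) = (i0 - m) - 1 := by push_cast; ring
      rw [e]; exact step_down _ ih
  have allW : ∀ n : ℤ, Finsupp.single n (1:ℂ) ∈ W := by
    intro n
    rcases le_or_gt i0 n with h | h
    · have : n = i0 + (n - i0).toNat := by omega
      rw [this]; exact up _
    · have : n = i0 - (i0 - n).toNat := by omega
      rw [this]; exact down _
  rw [eq_top_iff]
  rintro v -
  induction v using Finsupp.induction_linear with
  | zero => exact W.zero_mem
  | add a b ha hb => exact W.add_mem ha hb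
  | single a b =>
    have := W.smul_mem b (allW a)
    rwa [Finsupp.smul_single', mul_one] at this

/-- Let `f` be non-constant, `λ ∈ S_f` non-periodic with `λ(i) + ż ≠ 0` for all
`i`.  On `ℂ[t, t⁻¹]` (realized as `ℤ →₀ ℂ`, `tⁱ = single i 1`), define
`h·tⁱ = λ(i)tⁱ`, `x·tⁱ = t^{i+1}`, `y·tⁱ = (λ(i)+ż)t^{i−1}`.  Then every
nonzero subspace invariant under `x`, `h`, `y` is the whole space, i.e. the
module `A(λ, ż)` is simple. -/
theorem A_module_simple (f : Polynomial ℂ) (hf : 1 ≤ f.natDegree)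
    (lam : ℤ → ℂ) (hlam : ∀ i : ℤ, f.eval (lam i) = lam (i + 1))
    (zdot : ℂ) (hz : ∀ i : ℤ, lam i + zdot ≠ 0)
    (hnp : ∀ m : ℤ, (∀ i : ℤ, lam i = lam (i + m)) → m = 0) :
    letI Xop : (ℤ →₀ ℂ) →ₗ[ℂ] (ℤ →₀ ℂ) :=
      Finsupp.lsum ℂ fun i : ℤ => (Finsupp.lsingle (i + 1) : ℂ →ₗ[ℂ] (ℤ →₀ ℂ))
    letI Hop : (ℤ →₀ ℂ) →ₗ[ℂ] (ℤ →₀ ℂ) :=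
      Finsupp.lsum ℂ fun i : ℤ =>
        (Finsupp.lsingle i : ℂ →ₗ[ℂ] (ℤ →₀ ℂ)).comp (LinearMap.lsmul ℂ ℂ (lam i))
    letI Yop : (ℤ →₀ ℂ) →ₗ[ℂ] (ℤ →₀ ℂ) :=
      Finsupp.lsum ℂ fun i : ℤ =>
        (Finsupp.lsingle (i - 1) : ℂ →ₗ[ℂ] (ℤ →₀ ℂ)).comp
          (LinearMap.lsmul ℂ ℂ (lam i + zdot))
    ∀ W : Submodule ℂ (ℤ →₀ ℂ), W ≠ ⊥ →
      (∀ v ∈ W, Xop v ∈ W) → (∀ v ∈ W, Hop v ∈ W) → (∀ v ∈ W, Yop v ∈ W) →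
      W = ⊤ := by
  refine fun W hW h1 h2 h3 => aux_simple f lam hlam zdot hz hnp _ _ _ ?_ ?_ ?_ W hW h1 h2 h3
  · intro i c
    simp only [Finsupp.lsum_single, Finsupp.lsingle_apply]
  · intro i c
    simp only [Finsupp.lsum_single, LinearMap.coe_comp, Function.comp_apply,
      LinearMap.lsmul_apply, smul_eq_mul, Finsupp.lsingle_apply]
  · intro i c
    simp only [Finsupp.lsum_single, LinearMap.coe_comp, Function.comp_apply,
      LinearMap.lsmul_apply, smul_eq_mul, Finsupp.lsingle_apply]
end
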